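/- arXiv:2012.12710 — 2 statements merged into one kernel-verified Lean document; each statement's English description precedes it below -/
import Mathlib

section
/- If agents have matroid-rank valuations and (A_1,…,A_n) is a partial allocation with each A_i independent in M_i that maximizes social welfare, and for some agents i, j we have v_i(A_i) < μ_i(2, A_i ∪ A_j), then |A_i| + 2 ≤ |A_j|. -/
structure FinMatroid (E : Type*) [Fintype E] [DecidableEq E] where
  Indep : Finset E → Prop
  empty_indep : Indep ∅
  subset_indep : ∀ ⦃I J : Finset E⦄, Indep I → J ⊆ I → Indep J
  aug : ∀ ⦃I J : Finset E⦄, Indep I → Indep J → I.card < J.card →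
    ∃ g ∈ J \ I, Indep (insert g I)

noncomputable def FinMatroid.rank {E : Type*} [Fintype E] [DecidableEq E]
    (M : FinMatroid E) (S : Finset E) : ℕ :=
  sSup {t | ∃ I : Finset E, I ⊆ S ∧ M.Indep I ∧ I.card = t}

/-- Maximin share `μ(k, S)` for a ℕ-valued valuation `v`: the maximum over
`k`-partitions `(Y 0, …, Y (k-1))` of `S` of `min_j v (Y j)`. -/
noncomputable def mmsN {E : Type*} [Fintype E] [DecidableEq E]
    (v : Finset E → ℕ) (k : ℕ) (S : Finset E) : ℕ :=
  sSup {t | ∃ Y : Fin k → Finset E,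
    (∀ a b, a ≠ b → Disjoint (Y a) (Y b)) ∧ Finset.univ.biUnion Y = S ∧
    ∀ j, t ≤ v (Y j)}

lemma FinMatroid.rank_le_card {E : Type*} [Fintype E] [DecidableEq E]
    (M : FinMatroid E) (S : Finset E) : M.rank S ≤ S.card := by
  refine csSup_le' ?_
  rintro t ⟨I, hIS, -, rfl⟩
  exact Finset.card_le_card hIS

lemma FinMatroid.rank_of_indep {E : Type*} [Fintype E] [DecidableEq E]
    (M : FinMatroid E) {S : Finset E} (h : M.Indep S) : M.rank S = S.card := by
  refine le_antisymm (M.rank_le_card S) (le_csSup ⟨S.card, ?_⟩ ⟨S, subset_rfl, h, rfl⟩)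
  rintro t ⟨I, hIS, -, rfl⟩
  exact Finset.card_le_card hIS

/-- In a welfare-maximizing partial allocation with independent bundles, if agent `i`
fails the PMMS criterion against agent `j`, then `|A i| + 2 ≤ |A j|`. -/
theorem stmt10 {n m : ℕ} (Ms : Fin n → FinMatroid (Fin m))
    (A : Fin n → Finset (Fin m))
    (hdisj : ∀ a b, a ≠ b → Disjoint (A a) (A b))
    (hind : ∀ k, (Ms k).Indep (A k))
    (hswmax : ∀ B : Fin n → Finset (Fin m),
      (∀ a b, a ≠ b → Disjoint (B a) (B b)) → Finset.univ.biUnion B = Finset.univ →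
      ∑ k, (Ms k).rank (B k) ≤ ∑ k, (Ms k).rank (A k))
    (i j : Fin n)
    (hfail : (Ms i).rank (A i) < mmsN (Ms i).rank 2 (A i ∪ A j)) :
    (A i).card + 2 ≤ (A j).card := by
  have hri : (Ms i).rank (A i) = (A i).card := (Ms i).rank_of_indep (hind i)
  rw [mmsN, hri] at hfail
  set T : Set ℕ := {t | ∃ Y : Fin 2 → Finset (Fin m),
    (∀ a b, a ≠ b → Disjoint (Y a) (Y b)) ∧ Finset.univ.biUnion Y = A i ∪ A j ∧
    ∀ l, t ≤ (Ms i).rank (Y l)} with hT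
  have hbdd : BddAbove T := by
    refine ⟨(A i ∪ A j).card, ?_⟩
    rintro t ⟨Y, hd, hu, hle⟩
    calc t ≤ (Ms i).rank (Y 0) := hle 0
      _ ≤ (Y 0).card := (Ms i).rank_le_card _
      _ ≤ (A i ∪ A j).card := Finset.card_le_card (by
            rw [← hu]; exact Finset.subset_biUnion_of_mem Y (Finset.mem_univ 0))
  have hne : T.Nonempty := by
    by_contra h
    rw [Set.not_nonempty_iff_eq_empty] at h
    rw [h] at hfail
    simp [csSup_empty] at hfail
  obtain ⟨Y, hd, hu, hle⟩ := Nat.sSup_mem hne hbdd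
  have hkey : ∀ l : Fin 2, (A i).card + 1 ≤ (Y l).card := by
    intro l
    have h1 := hle l
    have h2 := (Ms i).rank_le_card (Y l)
    omega
  have hunion : Y 0 ∪ Y 1 = A i ∪ A j := by
    rw [← hu]
    ext x
    simp [Fin.exists_fin_two]
  have hcard : (Y 0).card + (Y 1).card = (A i ∪ A j).card := by
    rw [← Finset.card_union_of_disjoint (hd 0 1 (by decide)), hunion]
  have hle2 : (A i ∪ A j).card ≤ (A i).card + (A j).card := Finset.card_union_le _ _
  have := hkey 0
  have := hkey 1
  omega
end

section
/- In a fair division instance with matroid-rank valuations, if a social-welfare-maximizing partial allocation (A_1,…,A_n) satisfies the pairwise maximin share guarantee, then it is (1/(2n−1))-approximately MMS: v_i(A_i) ≥ μ_i(n,[m]) / (2n−1) for all agents i. -/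
namespace FinMatroid
variable {E : Type*} [Fintype E] [DecidableEq E] (M : FinMatroid E)

lemma card_le_rank {I S : Finset E} (hIS : I ⊆ S) (hI : M.Indep I) :
    I.card ≤ M.rank S :=
  le_csSup ⟨S.card, fun t ⟨J, hJS, _, hJc⟩ => hJc ▸ Finset.card_le_card hJS⟩
    ⟨I, hIS, hI, rfl⟩

lemma exists_basis (S : Finset E) :
    ∃ I : Finset E, I ⊆ S ∧ M.Indep I ∧ I.card = M.rank S := by
  have h : M.rank S ∈ {t | ∃ I : Finset E, I ⊆ S ∧ M.Indep I ∧ I.card = t} :=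
    Nat.sSup_mem ⟨0, ∅, Finset.empty_subset S, M.empty_indep, Finset.card_empty⟩
      ⟨S.card, fun t ⟨J, hJS, _, hJc⟩ => hJc ▸ Finset.card_le_card hJS⟩
  exact h

lemma rank_le_card_s14 (S : Finset E) : M.rank S ≤ S.card := by
  obtain ⟨I, hIS, _, hc⟩ := M.exists_basis S
  exact hc ▸ Finset.card_le_card hIS

lemma rank_mono {S T : Finset E} (h : S ⊆ T) : M.rank S ≤ M.rank T := by
  obtain ⟨I, hIS, hI, hc⟩ := M.exists_basis S
  exact hc ▸ M.card_le_rank (hIS.trans h) hI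

lemma rank_indep {I : Finset E} (hI : M.Indep I) : M.rank I = I.card :=
  le_antisymm (M.rank_le_card_s14 I) (M.card_le_rank (le_refl I) hI)

lemma exists_basis_superset_aux (S : Finset E) :
    ∀ k (I : Finset E), I ⊆ S → M.Indep I → M.rank S ≤ I.card + k →
      ∃ J, I ⊆ J ∧ J ⊆ S ∧ M.Indep J ∧ J.card = M.rank S := by
  intro k
  induction k with
  | zero =>
    intro I hIS hI hle
    exact ⟨I, le_refl I, hIS, hI, le_antisymm (M.card_le_rank hIS hI) (by simpa using hle)⟩
  | succ k ih =>
    intro I hIS hI hle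
    by_cases hc : M.rank S ≤ I.card
    · exact ⟨I, le_refl I, hIS, hI, le_antisymm (M.card_le_rank hIS hI) hc⟩
    · obtain ⟨B, hBS, hB, hBc⟩ := M.exists_basis S
      obtain ⟨g, hg, hgI⟩ := M.aug hI hB (by omega)
      obtain ⟨hgB, hgnI⟩ := Finset.mem_sdiff.mp hg
      obtain ⟨J, hIJ, hJS, hJ, hJc⟩ := ih (insert g I)
        (Finset.insert_subset (hBS hgB) hIS) hgI
        (by rw [Finset.card_insert_of_notMem hgnI]; omega)
      exact ⟨J, (Finset.subset_insert g I).trans hIJ, hJS, hJ, hJc⟩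

lemma exists_basis_superset {I S : Finset E} (hIS : I ⊆ S) (hI : M.Indep I) :
    ∃ J, I ⊆ J ∧ J ⊆ S ∧ M.Indep J ∧ J.card = M.rank S :=
  M.exists_basis_superset_aux S (M.rank S) I hIS hI (Nat.le_add_left _ _)

lemma rank_submod (X Y : Finset E) :
    M.rank (X ∪ Y) + M.rank (X ∩ Y) ≤ M.rank X + M.rank Y := by
  obtain ⟨I, hIXY, hI, hIc⟩ := M.exists_basis (X ∩ Y)
  obtain ⟨J, hIJ, hJXY, hJ, hJc⟩ := M.exists_basis_superset
    (hIXY.trans (Finset.inter_subset_union)) hI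
  have hJX : (J ∩ X).card ≤ M.rank X :=
    M.card_le_rank (Finset.inter_subset_right) (M.subset_indep hJ Finset.inter_subset_left)
  have hJY : (J ∩ Y).card ≤ M.rank Y :=
    M.card_le_rank (Finset.inter_subset_right) (M.subset_indep hJ Finset.inter_subset_left)
  have hJinter : (J ∩ (X ∩ Y)).card ≤ I.card := by
    have : J ∩ (X ∩ Y) ⊆ X ∩ Y := Finset.inter_subset_right
    have h2 : M.Indep (J ∩ (X ∩ Y)) := M.subset_indep hJ Finset.inter_subset_left
    calc (J ∩ (X ∩ Y)).card ≤ M.rank (X ∩ Y) := M.card_le_rank this h2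
    _ = I.card := hIc.symm
  have hIJint : I.card ≤ (J ∩ (X ∩ Y)).card :=
    Finset.card_le_card (Finset.subset_inter hIJ hIXY)
  have hsplit : (J ∩ X).card + (J ∩ Y).card
      = (J ∩ (X ∪ Y)).card + (J ∩ (X ∩ Y)).card := by
    rw [Finset.inter_union_distrib_left, Finset.inter_inter_distrib_left]
    exact (Finset.card_union_add_card_inter _ _).symm
  have hJXY' : J ∩ (X ∪ Y) = J := Finset.inter_eq_left.mpr hJXY
  rw [hJXY'] at hsplit
  omega

lemma exists_nonloop {S : Finset E} (h : 1 ≤ M.rank S) :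
    ∃ x ∈ S, M.Indep {x} := by
  obtain ⟨I, hIS, hI, hc⟩ := M.exists_basis S
  obtain ⟨x, hx⟩ := Finset.card_pos.mp (hc ▸ h)
  exact ⟨x, hIS hx, M.subset_indep hI (Finset.singleton_subset_iff.mpr hx)⟩

end FinMatroid

section mmsLemmas
variable {E : Type*} [Fintype E] [DecidableEq E]

lemma le_mmsN {k : ℕ} {S : Finset E} {t : ℕ} (M : FinMatroid E)
    (Y : Fin k → Finset E)
    (hd : ∀ a b, a ≠ b → Disjoint (Y a) (Y b)) (hu : Finset.univ.biUnion Y = S)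
    (hk : 0 < k) (ht : ∀ j, t ≤ M.rank (Y j)) : t ≤ mmsN M.rank k S := by
  apply le_csSup
  · refine ⟨Fintype.card E, ?_⟩
    rintro x ⟨Z, hZd, hZu, hZ⟩
    exact (hZ ⟨0, hk⟩).trans ((M.rank_le_card_s14 _).trans (Finset.card_le_univ _))
  · exact ⟨Y, hd, hu, ht⟩

lemma mmsN_le {k : ℕ} {S : Finset E} {t : ℕ} (v : Finset E → ℕ)
    (h : ∀ Y : Fin k → Finset E, (∀ a b, a ≠ b → Disjoint (Y a) (Y b)) →
      Finset.univ.biUnion Y = S → ∃ j, v (Y j) ≤ t) :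
    mmsN v k S ≤ t := by
  apply csSup_le'
  rintro x ⟨Y, hd, hu, hx⟩
  obtain ⟨j, hj⟩ := h Y hd hu
  exact (hx j).trans hj

lemma le_mmsN_two {S : Finset E} {t : ℕ} (M : FinMatroid E)
    (Y0 Y1 : Finset E) (hd : Disjoint Y0 Y1) (hu : Y0 ∪ Y1 = S)
    (h0 : t ≤ M.rank Y0) (h1 : t ≤ M.rank Y1) : t ≤ mmsN M.rank 2 S := by
  apply le_mmsN M ![Y0, Y1]
  · intro a b hab
    fin_cases a <;> fin_cases b <;> simp_all [disjoint_comm]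
  · rw [show (Finset.univ : Finset (Fin 2)) = {0, 1} by rfl]
    simp [Finset.biUnion_insert, hu]
  · norm_num
  · intro j; fin_cases j <;> simpa

lemma rank_le_two_mmsN_add_one (M : FinMatroid E) (S : Finset E) :
    M.rank S ≤ 2 * mmsN M.rank 2 S + 1 := by
  obtain ⟨B, hBS, hB, hBc⟩ := M.exists_basis S
  obtain ⟨B1, hB1B, hB1c⟩ := Finset.exists_subset_card_eq
    (Nat.div_le_self B.card 2)
  have key : B.card / 2 ≤ mmsN M.rank 2 S := by
    apply le_mmsN_two M (S \ (B \ B1)) (B \ B1) Finset.sdiff_disjoint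
      (Finset.sdiff_union_of_subset ((Finset.sdiff_subset).trans hBS))
    · have hB1sub : B1 ⊆ S \ (B \ B1) := by
        intro x hx
        simp only [Finset.mem_sdiff, Finset.mem_sdiff, not_and, not_not]
        exact ⟨hBS (hB1B hx), fun _ => hx⟩
      calc B.card / 2 = B1.card := hB1c.symm
        _ ≤ M.rank _ := M.card_le_rank hB1sub (M.subset_indep hB (by exact hB1B))
    · have : M.rank (B \ B1) = (B \ B1).card :=
        M.rank_indep (M.subset_indep hB (Finset.sdiff_subset))
      rw [this, Finset.card_sdiff_of_subset hB1B, hB1c]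
      omega
  omega

lemma one_le_mmsN_two (M : FinMatroid E) {x y : E} {S : Finset E}
    (hxy : x ≠ y) (hx : x ∈ S) (hy : y ∈ S)
    (hix : M.Indep {x}) (hiy : M.Indep {y}) : 1 ≤ mmsN M.rank 2 S := by
  apply le_mmsN_two M (S \ {y}) {y} Finset.sdiff_disjoint
    (Finset.sdiff_union_of_subset (Finset.singleton_subset_iff.mpr hy))
  · have : ({x} : Finset E) ⊆ S \ {y} := by
      simp [Finset.singleton_subset_iff, hx, hxy]
    calc 1 = ({x} : Finset E).card := rfl
      _ ≤ _ := M.card_le_rank this hix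
  · rw [M.rank_indep hiy]; simp

end mmsLemmas
/-- A social-welfare-maximizing PMMS partial allocation is `1/(2n−1)`-approximately
MMS. -/
theorem stmt14 {n m : ℕ} (hn : 1 ≤ n) (Ms : Fin n → FinMatroid (Fin m))
    (A : Fin n → Finset (Fin m))
    (hdisj : ∀ a b, a ≠ b → Disjoint (A a) (A b))
    (hswmax : ∀ B : Fin n → Finset (Fin m),
      (∀ a b, a ≠ b → Disjoint (B a) (B b)) → Finset.univ.biUnion B = Finset.univ →
      ∑ k, (Ms k).rank (B k) ≤ ∑ k, (Ms k).rank (A k))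
    (hpmms : ∀ i j, mmsN (Ms i).rank 2 (A i ∪ A j) ≤ (Ms i).rank (A i)) :
    ∀ i, (mmsN (Ms i).rank n Finset.univ : ℝ) / (2 * n - 1) ≤ ((Ms i).rank (A i) : ℝ) := by
  intro i
  set t := (Ms i).rank (A i) with ht
  set U : Finset (Fin m) := Finset.univ \ Finset.univ.biUnion A with hU
  have hUA : ∀ k, Disjoint U (A k) := fun k =>
    Finset.disjoint_left.mpr (fun x hxU hxA =>
      (Finset.mem_sdiff.mp hxU).2 (Finset.mem_biUnion.mpr ⟨k, Finset.mem_univ k, hxA⟩))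
  -- rank of A i ∪ U equals t
  have hAU : (Ms i).rank (A i ∪ U) = t := by
    refine le_antisymm ?_ ((Ms i).rank_mono Finset.subset_union_left)
    have hB := hswmax (Function.update A i (A i ∪ U)) ?_ ?_
    · rw [← Finset.add_sum_erase _ (fun k => (Ms k).rank (Function.update A i (A i ∪ U) k))
        (Finset.mem_univ i),
        ← Finset.add_sum_erase _ (fun k => (Ms k).rank (A k)) (Finset.mem_univ i)] at hB
      have heq : ∑ k ∈ Finset.univ.erase i,
          (Ms k).rank (Function.update A i (A i ∪ U) k)
          = ∑ k ∈ Finset.univ.erase i, (Ms k).rank (A k) :=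
        Finset.sum_congr rfl (fun k hk => by
          rw [Function.update_of_ne (Finset.ne_of_mem_erase hk)])
      rw [heq, Function.update_self] at hB
      omega
    · intro a b hab
      rcases eq_or_ne a i with rfl | ha
      · rw [Function.update_self, Function.update_of_ne (Ne.symm hab)]
        exact Finset.disjoint_union_left.mpr ⟨hdisj a b hab, hUA b⟩
      · rw [Function.update_of_ne ha]
        rcases eq_or_ne b i with rfl | hb
        · rw [Function.update_self]
          exact Finset.disjoint_union_right.mpr ⟨hdisj a b hab, (hUA a).symm⟩
        · rw [Function.update_of_ne hb]; exact hdisj a b hab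
    · apply Finset.eq_univ_iff_forall.mpr
      intro x
      by_cases hx : x ∈ Finset.univ.biUnion A
      · obtain ⟨k, _, hk⟩ := Finset.mem_biUnion.mp hx
        rcases eq_or_ne k i with rfl | hki
        · exact Finset.mem_biUnion.mpr ⟨k, Finset.mem_univ k,
            by rw [Function.update_self]; exact Finset.mem_union_left _ hk⟩
        · exact Finset.mem_biUnion.mpr ⟨k, Finset.mem_univ k,
            by rw [Function.update_of_ne hki]; exact hk⟩
      · exact Finset.mem_biUnion.mpr ⟨i, Finset.mem_univ i,
          by rw [Function.update_self]
             exact Finset.mem_union_right _ (Finset.mem_sdiff.mpr ⟨Finset.mem_univ x, hx⟩)⟩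
  -- each pair bound
  have hij : ∀ j, (Ms i).rank (A i ∪ A j) ≤ 2 * t + 1 := fun j =>
    (rank_le_two_mmsN_add_one (Ms i) _).trans (by have := hpmms i j; omega)
  -- telescoping bound
  have htel : ∀ F : Finset (Fin n), i ∉ F →
      (Ms i).rank (A i ∪ U ∪ F.biUnion A) + F.card * t
        ≤ t + ∑ j ∈ F, (Ms i).rank (A i ∪ A j) := by
    intro F
    induction F using Finset.induction_on with
    | empty => simp [hAU]
    | @insert j F hjF ihF =>
      intro hiF
      have hji : j ≠ i := fun h => hiF (h ▸ Finset.mem_insert_self j F)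
      have hiF' : i ∉ F := fun h => hiF (Finset.mem_insert_of_mem h)
      have hsub := (Ms i).rank_submod (A i ∪ U ∪ F.biUnion A) (A i ∪ A j)
      have hXu : (A i ∪ U ∪ F.biUnion A) ∪ (A i ∪ A j)
          = A i ∪ U ∪ (insert j F).biUnion A := by
        rw [Finset.biUnion_insert]
        ext x
        simp only [Finset.mem_union]
        tauto
      have hXi : t ≤ (Ms i).rank ((A i ∪ U ∪ F.biUnion A) ∩ (A i ∪ A j)) := by
        apply (Ms i).rank_mono (Finset.subset_inter ?_ Finset.subset_union_left)
        exact (Finset.subset_union_left).trans Finset.subset_union_left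
      rw [hXu] at hsub
      have hsum : ∑ x ∈ insert j F, (Ms i).rank (A i ∪ A x)
          = (Ms i).rank (A i ∪ A j) + ∑ x ∈ F, (Ms i).rank (A i ∪ A x) :=
        Finset.sum_insert hjF
      rw [hsum, Finset.card_insert_of_notMem hjF, add_mul, one_mul]
      have := ihF hiF'
      omega
  -- apply to all other agents
  have hcov : A i ∪ U ∪ (Finset.univ.erase i).biUnion A = Finset.univ := by
    apply Finset.eq_univ_iff_forall.mpr
    intro x
    simp only [Finset.mem_union, Finset.mem_biUnion, Finset.mem_erase]
    by_cases hx : x ∈ Finset.univ.biUnion A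
    · obtain ⟨k, _, hk⟩ := Finset.mem_biUnion.mp hx
      rcases eq_or_ne k i with rfl | hki
      · exact Or.inl (Or.inl hk)
      · exact Or.inr ⟨k, ⟨hki, Finset.mem_univ k⟩, hk⟩
    · exact Or.inl (Or.inr (Finset.mem_sdiff.mpr ⟨Finset.mem_univ x, hx⟩))
  have hbig : (Ms i).rank Finset.univ + (n - 1) * t ≤ t + (n - 1) * (2 * t + 1) := by
    have h1 := htel (Finset.univ.erase i) (Finset.notMem_erase i _)
    rw [hcov] at h1
    have hcard : (Finset.univ.erase i).card = n - 1 := by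
      rw [Finset.card_erase_of_mem (Finset.mem_univ i), Finset.card_univ, Fintype.card_fin]
    have hsum : ∑ j ∈ Finset.univ.erase i, (Ms i).rank (A i ∪ A j)
        ≤ (n - 1) * (2 * t + 1) := by
      calc ∑ j ∈ Finset.univ.erase i, (Ms i).rank (A i ∪ A j)
          ≤ ∑ _j ∈ Finset.univ.erase i, (2 * t + 1) :=
            Finset.sum_le_sum (fun j _ => hij j)
        _ = (n - 1) * (2 * t + 1) := by rw [Finset.sum_const, hcard, smul_eq_mul]
    rw [hcard] at h1
    omega
  have hmu_r : mmsN (Ms i).rank n Finset.univ ≤ (Ms i).rank Finset.univ := by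
    apply mmsN_le
    intro Y hd hu
    exact ⟨⟨0, hn⟩, (Ms i).rank_mono (Finset.subset_univ _)⟩
  -- the key natural-number inequality
  have key : mmsN (Ms i).rank n Finset.univ ≤ (2 * n - 1) * t := by
    rcases Nat.eq_zero_or_pos t with h0 | h1
    · suffices h : mmsN (Ms i).rank n Finset.univ = 0 by omega
      by_contra hne
      have hmu1 : 1 ≤ mmsN (Ms i).rank n Finset.univ := Nat.one_le_iff_ne_zero.mpr hne
      have hmem : mmsN (Ms i).rank n Finset.univ ∈
          {s | ∃ Y : Fin n → Finset (Fin m),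
            (∀ a b, a ≠ b → Disjoint (Y a) (Y b)) ∧
            Finset.univ.biUnion Y = Finset.univ ∧
            ∀ j, s ≤ (Ms i).rank (Y j)} := by
        apply Nat.sSup_mem
        · refine ⟨0, fun j => if j = ⟨0, hn⟩ then Finset.univ else ∅, ?_, ?_, ?_⟩
          · intro a b hab
            rcases eq_or_ne a ⟨0, hn⟩ with rfl | ha
            · simp [Ne.symm hab]
            · simp [ha]
          · apply Finset.eq_univ_iff_forall.mpr
            intro x
            exact Finset.mem_biUnion.mpr ⟨⟨0, hn⟩, Finset.mem_univ _, by simp⟩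
          · intro j; exact Nat.zero_le _
        · refine ⟨Fintype.card (Fin m), ?_⟩
          rintro s ⟨Y, hYd, hYu, hY⟩
          exact (hY ⟨0, hn⟩).trans (((Ms i).rank_le_card_s14 _).trans (Finset.card_le_univ _))
      obtain ⟨Y, hYd, hYu, hY⟩ := hmem
      choose x hxY hxI using fun j => (Ms i).exists_nonloop (hmu1.trans (hY j))
      have hnotAU : ∀ j, x j ∉ A i ∪ U := by
        intro j hmem'
        have h1x : 1 ≤ (Ms i).rank (A i ∪ U) := by
          have := (Ms i).card_le_rank (Finset.singleton_subset_iff.mpr hmem') (hxI j)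
          simpa using this
        omega
      have hxk : ∀ j, ∃ k, k ≠ i ∧ x j ∈ A k := by
        intro j
        have hxu : x j ∈ Finset.univ.biUnion A := by
          by_contra hc
          exact hnotAU j (Finset.mem_union_right _
            (Finset.mem_sdiff.mpr ⟨Finset.mem_univ _, hc⟩))
        obtain ⟨k, _, hk⟩ := Finset.mem_biUnion.mp hxu
        refine ⟨k, ?_, hk⟩
        rintro rfl
        exact hnotAU j (Finset.mem_union_left _ hk)
      choose k hki hkA using hxk
      have hninj : ¬ Function.Injective k := by
        intro hinj
        obtain ⟨j, hj⟩ := Finite.surjective_of_injective hinj i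
        exact hki j hj
      rw [Function.not_injective_iff] at hninj
      obtain ⟨a, b, hkab, hab⟩ := hninj
      have hxab : x a ≠ x b := fun he =>
        Finset.disjoint_left.mp (hYd a b hab) (hxY a) (he ▸ hxY b)
      have hone : 1 ≤ mmsN (Ms i).rank 2 (A i ∪ A (k a)) :=
        one_le_mmsN_two (Ms i) hxab (Finset.mem_union_right _ (hkA a))
          (Finset.mem_union_right _ (hkab ▸ hkA b)) (hxI a) (hxI b)
      have := hpmms i (k a)
      omega
    · obtain ⟨a, rfl⟩ : ∃ a, n = a + 1 := ⟨n - 1, by omega⟩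
      have hbig' : (Ms i).rank Finset.univ + a * t ≤ t + a * (2 * t + 1) := by
        simpa using hbig
      have h2n : 2 * (a + 1) - 1 = 2 * a + 1 := by omega
      rw [h2n]
      nlinarith [hmu_r, hbig', Nat.mul_le_mul_left a h1]
  -- conclude over ℝ
  have hpos : (0:ℝ) < 2 * (n:ℝ) - 1 := by
    have : (1:ℝ) ≤ (n:ℝ) := by exact_mod_cast hn
    linarith
  rw [div_le_iff₀ hpos]
  have hcast : ((2 * n - 1 : ℕ) : ℝ) = 2 * (n:ℝ) - 1 := by
    have h2 : 1 ≤ 2 * n := by omega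
    push_cast [Nat.cast_sub h2]
    ring
  calc (mmsN (Ms i).rank n Finset.univ : ℝ)
      ≤ ((2 * n - 1 : ℕ) : ℝ) * (t : ℝ) := by exact_mod_cast key
    _ = (t : ℝ) * (2 * (n:ℝ) - 1) := by rw [hcast]; ring
end
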